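/- Suppose the binary relation ≻ on F satisfies Axioms 1, 2, 3 and 5. Then for every f ∈ F, the set {x ∈ X : x ⋈ f} is non-empty. -/
import Mathlib


/-!
Framework: Anscombe–Aumann acts, finitely additive probability measures,
simple acts, hope-and-prepare preferences (Bastianello–Hill style setup).
-/

open Set

section Framework

variable (S : Type*) [MeasurableSpace S]

/-- The measurable sets (events) of `S`, as a subtype. -/
abbrev MSet := {A : Set S // MeasurableSet A}

/-- Finitely additive probability measures on `(S, Σ)`, viewed as real-valued
set functions on events.  The weak* topology is the topology of pointwise
convergence on events, i.e. the product topology on `MSet S → ℝ`. -/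
def ProbCharges : Set (MSet S → ℝ) :=
  {p | (∀ A, 0 ≤ p A) ∧ p ⟨Set.univ, MeasurableSet.univ⟩ = 1 ∧
    ∀ A B : MSet S, Disjoint A.1 B.1 → p ⟨A.1 ∪ B.1, A.2.union B.2⟩ = p A + p B}

end Framework

section Fns

variable {S : Type*} [MeasurableSpace S]

/-- `φ : S → ℝ` is a measurable simple function (an element of `B₀(Σ)`). -/
def IsSimpleFn (φ : S → ℝ) : Prop :=
  (Set.range φ).Finite ∧ ∀ y : ℝ, MeasurableSet (φ ⁻¹' {y})

/-- The integral `∫ φ dp` of a simple function `φ` against a finitely additive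
measure `p` (junk value `0` if `φ` is not simple). -/
noncomputable def fInt (p : MSet S → ℝ) (φ : S → ℝ) : ℝ :=
  @dite _ (IsSimpleFn φ) (Classical.dec _)
    (fun h => ∑ y ∈ h.1.toFinset, y * p ⟨φ ⁻¹' {y}, h.2 y⟩) (fun _ => 0)

/-- A functional `I : B₀(Σ) → ℝ` is monotonic. -/
def MonotonicFn (I : (S → ℝ) → ℝ) : Prop :=
  ∀ φ ψ, IsSimpleFn φ → IsSimpleFn ψ → (∀ s, φ s ≤ ψ s) → I φ ≤ I ψ

/-- A functional `I : B₀(Σ) → ℝ` is constant-linear: `I(aφ + b) = a I(φ) + b`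
for `a ≥ 0`, `b ∈ ℝ`. -/
def ConstLinearFn (I : (S → ℝ) → ℝ) : Prop :=
  ∀ φ, IsSimpleFn φ → ∀ a : ℝ, 0 ≤ a → ∀ b : ℝ,
    I (fun s => a * φ s + b) = a * I φ + b

end Fns

section Acts

variable {S : Type*} [MeasurableSpace S] {V : Type*} [AddCommGroup V] [Module ℝ V]

/-- `f : S → V` is a simple act with outcomes in `X`: it is `X`-valued,
takes finitely many values and is `Σ`-measurable. -/
def IsAct (X : Set V) (f : S → V) : Prop :=
  (∀ s, f s ∈ X) ∧ (Set.range f).Finite ∧ ∀ v : V, MeasurableSet (f ⁻¹' {v})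

/-- Pointwise mixture `αf + (1-α)g` of two acts. -/
def mixAct (α : ℝ) (f g : S → V) : S → V := fun s => α • f s + (1 - α) • g s

/-- The constant act with outcome `x`. -/
def constAct (S : Type*) {V : Type*} (x : V) : S → V := fun _ => x

/-- `u : V → ℝ` is affine on the convex set `X`. -/
def IsAffineOn (u : V → ℝ) (X : Set V) : Prop :=
  ∀ x ∈ X, ∀ y ∈ X, ∀ α : ℝ, 0 ≤ α → α ≤ 1 →
    u (α • x + (1 - α) • y) = α * u x + (1 - α) * u y

/-- `u` is non-constant on `X`. -/
def NonConstOn (u : V → ℝ) (X : Set V) : Prop := ∃ x ∈ X, ∃ y ∈ X, u x ≠ u y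

/-- Expected utility `∫ u(f) dp` of the act `f` under the measure `p`. -/
noncomputable def EU (u : V → ℝ) (f : S → V) (p : MSet S → ℝ) : ℝ :=
  fInt p (fun s => u (f s))

/-- Worst-case expected utility of `f` over the set of scenarios `C`. -/
noncomputable def minEU (u : V → ℝ) (C : Set (MSet S → ℝ)) (f : S → V) : ℝ :=
  sInf (EU u f '' C)

/-- Best-case expected utility of `f` over the set of scenarios `D`. -/
noncomputable def maxEU (u : V → ℝ) (D : Set (MSet S → ℝ)) (f : S → V) : ℝ :=
  sSup (EU u f '' D)

/-- `f` and `g` are incomparable (`f ⋈ g`). -/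
def Incomp (R : (S → V) → (S → V) → Prop) (f g : S → V) : Prop := ¬ R f g ∧ ¬ R g f

end Acts

section Axioms

variable {S : Type*} [MeasurableSpace S] {V : Type*} [AddCommGroup V] [Module ℝ V]
variable (X : Set V) (R : (S → V) → (S → V) → Prop)

/-- Axiom 1: `≻` is asymmetric and transitive on acts, and its restriction to
constant acts is non-trivial and negatively transitive. -/
def PrefAx1 : Prop :=
  (∀ f g, IsAct X f → IsAct X g → R f g → ¬ R g f) ∧
  (∀ f g h, IsAct X f → IsAct X g → IsAct X h → R f g → R g h → R f h) ∧
  (∃ x ∈ X, ∃ y ∈ X, R (constAct S x) (constAct S y)) ∧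
  (∀ x ∈ X, ∀ y ∈ X, ∀ z ∈ X, ¬ R (constAct S x) (constAct S y) →
    ¬ R (constAct S y) (constAct S z) → ¬ R (constAct S x) (constAct S z))

/-- Axiom 2 (continuity). -/
def PrefAx2 : Prop :=
  ∀ f g h, IsAct X f → IsAct X g → IsAct X h →
    IsOpen {α : Set.Icc (0 : ℝ) 1 | R (mixAct (α : ℝ) f g) h} ∧
    IsOpen {α : Set.Icc (0 : ℝ) 1 | R h (mixAct (α : ℝ) f g)}

/-- Axiom 3 (certainty independence). -/
def PrefAx3 : Prop :=
  ∀ f g, IsAct X f → IsAct X g → ∀ x ∈ X, ∀ α : ℝ, 0 < α → α < 1 →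
    (R f g ↔ R (mixAct α f (constAct S x)) (mixAct α g (constAct S x)))

/-- Axiom 4: for any outcome `x`, the upper and lower contour sets at the
constant act `x` are convex. -/
def PrefAx4 : Prop :=
  ∀ x ∈ X,
    (∀ f g, IsAct X f → IsAct X g → R f (constAct S x) → R g (constAct S x) →
      ∀ α : ℝ, 0 ≤ α → α ≤ 1 → R (mixAct α f g) (constAct S x)) ∧
    (∀ f g, IsAct X f → IsAct X g → R (constAct S x) f → R (constAct S x) g →
      ∀ α : ℝ, 0 ≤ α → α ≤ 1 → R (constAct S x) (mixAct α f g))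

/-- Axiom 5 (monotonicity). -/
def PrefAx5 : Prop :=
  ∀ f g, IsAct X f → IsAct X g →
    (∀ s : S, R (constAct S (f s)) (constAct S (g s))) → R f g

/-- Axiom 6: if every outcome incomparable to `f` is incomparable to `g`,
then `f` and `g` are incomparable. -/
def PrefAx6 : Prop :=
  ∀ f g, IsAct X f → IsAct X g →
    (∀ x ∈ X, Incomp R f (constAct S x) → Incomp R g (constAct S x)) → Incomp R f g

/-- Axiom 7: if `f ⋈ x`, `x ≻ g`, `g ⋈ y` and `f ≻ y`, then `f ≻ g`. -/
def PrefAx7 : Prop :=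
  ∀ f g, IsAct X f → IsAct X g → ∀ x ∈ X, ∀ y ∈ X,
    Incomp R f (constAct S x) → R (constAct S x) g →
    Incomp R g (constAct S y) → R f (constAct S y) → R f g

end Axioms

section Reps

variable {S : Type*} [MeasurableSpace S] {V : Type*} [AddCommGroup V] [Module ℝ V]

/-- `(u, C, D)` is a hope-and-prepare representation of `R`. -/
def IsHPRep (X : Set V) (R : (S → V) → (S → V) → Prop) (u : V → ℝ)
    (C D : Set (MSet S → ℝ)) : Prop :=
  IsAffineOn u X ∧ NonConstOn u X ∧
  C.Nonempty ∧ D.Nonempty ∧ C ⊆ ProbCharges S ∧ D ⊆ ProbCharges S ∧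
  IsCompact C ∧ IsCompact D ∧ Convex ℝ C ∧ Convex ℝ D ∧ (C ∩ D).Nonempty ∧
  ∀ f g, IsAct X f → IsAct X g →
    (R f g ↔ (minEU u C g < minEU u C f ∧ maxEU u D g < maxEU u D f))

/-- `(u, C)` is a Bewley representation of `R`. -/
def IsBewleyRep (X : Set V) (R : (S → V) → (S → V) → Prop) (u : V → ℝ)
    (C : Set (MSet S → ℝ)) : Prop :=
  IsAffineOn u X ∧ NonConstOn u X ∧
  C.Nonempty ∧ C ⊆ ProbCharges S ∧ IsCompact C ∧ Convex ℝ C ∧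
  ∀ f g, IsAct X f → IsAct X g → (R f g ↔ ∀ p ∈ C, EU u g p < EU u f p)

/-- `(u, C, D)` is a twofold multi-prior representation of `R`. -/
def IsTwofoldRep (X : Set V) (R : (S → V) → (S → V) → Prop) (u : V → ℝ)
    (C D : Set (MSet S → ℝ)) : Prop :=
  IsAffineOn u X ∧ NonConstOn u X ∧
  C.Nonempty ∧ D.Nonempty ∧ C ⊆ ProbCharges S ∧ D ⊆ ProbCharges S ∧
  IsCompact C ∧ IsCompact D ∧ Convex ℝ C ∧ Convex ℝ D ∧ (C ∩ D).Nonempty ∧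
  ∀ f g, IsAct X f → IsAct X g → (R f g ↔ maxEU u D g < minEU u C f)

end Reps


section Aux

private lemma finset_exists_rmin {A : Type*} (r : A → A → Prop) (t : Finset A) :
    (∀ a ∈ t, ¬ r a a) →
    (∀ a ∈ t, ∀ b ∈ t, ∀ c ∈ t, r a b → r b c → r a c) →
    t.Nonempty → ∃ y ∈ t, ∀ z ∈ t, ¬ r y z := by
  classical
  induction t using Finset.induction_on with
  | empty => intro _ _ ht; simp at ht
  | @insert a s has ih =>
    intro hirr htr _
    by_cases hs : s.Nonempty
    · obtain ⟨y, hy, hmin⟩ := ih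
        (fun b hb => hirr b (Finset.mem_insert_of_mem hb))
        (fun b hb c hc d hd => htr b (Finset.mem_insert_of_mem hb) c
          (Finset.mem_insert_of_mem hc) d (Finset.mem_insert_of_mem hd)) hs
      by_cases hya : r y a
      · refine ⟨a, Finset.mem_insert_self a s, ?_⟩
        intro z hz haz
        rcases Finset.mem_insert.1 hz with rfl | hz'
        · exact hirr z (Finset.mem_insert_self z s) haz
        · exact hmin z hz' (htr y (Finset.mem_insert_of_mem hy) a (Finset.mem_insert_self a s)
            z (Finset.mem_insert_of_mem hz') hya haz)
      · refine ⟨y, Finset.mem_insert_of_mem hy, ?_⟩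
        intro z hz hyz
        rcases Finset.mem_insert.1 hz with rfl | hz'
        · exact hya hyz
        · exact hmin z hz' hyz
    · rw [Finset.not_nonempty_iff_eq_empty] at hs
      subst hs
      refine ⟨a, Finset.mem_insert_self a ∅, ?_⟩
      intro z hz
      simp only [Finset.mem_insert, Finset.notMem_empty, or_false] at hz
      subst hz
      exact hirr z (Finset.mem_insert_self z ∅)

variable {S : Type*} [MeasurableSpace S] {V : Type*} [AddCommGroup V] [Module ℝ V]

private lemma constAct_isAct {X : Set V} {x : V} (hx : x ∈ X) :
    IsAct X (constAct S x) := by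
  refine ⟨fun _ => hx, ?_, ?_⟩
  · exact (Set.finite_singleton x).subset (by rintro v ⟨s, rfl⟩; exact rfl)
  · intro v
    by_cases h : x = v
    · subst h
      have h2 : (constAct S x) ⁻¹' {x} = Set.univ := by ext s; simp [constAct]
      rw [h2]; exact MeasurableSet.univ
    · have h2 : (constAct S x) ⁻¹' {v} = ∅ := by ext s; simp [constAct, h]
      rw [h2]; exact MeasurableSet.empty

private lemma mixAct_isAct {X : Set V} (hX : Convex ℝ X) {f : S → V} (hf : IsAct X f)
    {z : V} (hz : z ∈ X) {α : ℝ} (h0 : 0 < α) (h1 : α ≤ 1) :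
    IsAct X (mixAct α f (constAct S z)) := by
  refine ⟨?_, ?_, ?_⟩
  · intro s
    exact hX (hf.1 s) hz (le_of_lt h0) (by linarith) (by ring)
  · apply (hf.2.1.image (fun v => α • v + (1 - α) • z)).subset
    rintro v ⟨s, rfl⟩
    exact ⟨f s, ⟨s, rfl⟩, rfl⟩
  · intro v
    have hpre : (mixAct α f (constAct S z)) ⁻¹' {v}
        = f ⁻¹' {α⁻¹ • (v - (1 - α) • z)} := by
      ext s
      simp only [Set.mem_preimage, Set.mem_singleton_iff, mixAct, constAct]
      constructor
      · intro h
        rw [eq_comm, inv_smul_eq_iff₀ (ne_of_gt h0)]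
        rw [← h]; abel
      · intro h
        rw [eq_comm, inv_smul_eq_iff₀ (ne_of_gt h0)] at h
        rw [← h]; abel
    rw [hpre]; exact hf.2.2 _

private lemma mixAct_one (f g : S → V) : mixAct (1 : ℝ) f g = f := by
  funext s; simp [mixAct]

private lemma exists_mem_open_lt_one {O : Set (Set.Icc (0:ℝ) 1)} (hO : IsOpen O)
    (h1 : (⟨1, by norm_num⟩ : Set.Icc (0:ℝ) 1) ∈ O) :
    ∃ α : ℝ, 0 < α ∧ α < 1 ∧ ∃ hα : α ∈ Set.Icc (0:ℝ) 1, (⟨α, hα⟩ : Set.Icc (0:ℝ) 1) ∈ O := by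
  obtain ⟨ε, hε, hball⟩ := Metric.isOpen_iff.1 hO _ h1
  set r : ℝ := max (1 - ε / 2) (1 / 2) with hr
  have hr0 : (0:ℝ) < r := lt_of_lt_of_le (by norm_num) (le_max_right _ _)
  have hr1 : r < 1 := by apply max_lt <;> linarith
  have hrIcc : r ∈ Set.Icc (0:ℝ) 1 := ⟨le_of_lt hr0, le_of_lt hr1⟩
  refine ⟨r, hr0, hr1, hrIcc, ?_⟩
  apply hball
  rw [Metric.mem_ball, Subtype.dist_eq, Real.dist_eq]
  have hle : 1 - ε / 2 ≤ r := le_max_left _ _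
  show |r - 1| < ε
  rw [abs_of_nonpos (by linarith)]
  linarith

end Aux

section Statement

variable {S : Type*} [MeasurableSpace S] [Nonempty S]
variable {V : Type*} [AddCommGroup V] [Module ℝ V]

/-- Lemma 5: under Axioms 1, 2, 3 and 5, every act is
incomparable to some constant act. -/
theorem statement14 (X : Set V) (hX : Convex ℝ X) (hX2 : ∃ x ∈ X, ∃ y ∈ X, x ≠ y)
    (R : (S → V) → (S → V) → Prop)
    (hax : PrefAx1 X R ∧ PrefAx2 X R ∧ PrefAx3 X R ∧ PrefAx5 X R)
    (f : S → V) (hf : IsAct X f) :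
    ∃ x ∈ X, Incomp R (constAct S x) f := by
  classical
  obtain ⟨hax1, hax2, hax3, hax5⟩ := hax
  obtain ⟨hasym, htrans, ⟨p, hp, q, hq, hpq⟩, hneg⟩ := hax1
  have tgg : ∀ a ∈ X, ∀ b ∈ X, ∀ c ∈ X, R (constAct S a) (constAct S b) →
      ¬ R (constAct S c) (constAct S b) → R (constAct S a) (constAct S c) := by
    intro a ha b hb c hc hab hcb
    by_contra hac
    exact (hneg a ha c hc b hb hac hcb) hab
  have tgg' : ∀ a ∈ X, ∀ b ∈ X, ∀ c ∈ X, ¬ R (constAct S b) (constAct S a) →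
      R (constAct S b) (constAct S c) → R (constAct S a) (constAct S c) := by
    intro a ha b hb c hc hba hbc
    by_contra hac
    exact (hneg b hb a ha c hc hba hac) hbc
  by_contra hcon
  push_neg at hcon
  have hcomp : ∀ x ∈ X, R (constAct S x) f ∨ R f (constAct S x) := by
    intro x hx
    have h := hcon x hx
    rw [Incomp] at h
    tauto
  have hfin : (Set.range f).Finite := hf.2.1
  have htmem : ∀ s : S, f s ∈ hfin.toFinset := fun s => hfin.mem_toFinset.2 ⟨s, rfl⟩
  have htX : ∀ z ∈ hfin.toFinset, z ∈ X := by
    intro z hz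
    obtain ⟨s, rfl⟩ := hfin.mem_toFinset.1 hz
    exact hf.1 s
  have htne : hfin.toFinset.Nonempty := ⟨f (Classical.arbitrary S), htmem _⟩
  by_cases hA : ∃ a ∈ X, R (constAct S a) f
  · by_cases hB : ∃ b ∈ X, R f (constAct S b)
    · obtain ⟨a, ha, hra⟩ := hA
      obtain ⟨b, hb, hrb⟩ := hB
      obtain ⟨hU, hV⟩ := hax2 (constAct S a) (constAct S b) f
        (constAct_isAct ha) (constAct_isAct hb) hf
      have hmemX : ∀ γ : Set.Icc (0:ℝ) 1, (γ : ℝ) • a + (1 - (γ : ℝ)) • b ∈ X := fun γ =>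
        hX ha hb γ.2.1 (by linarith [γ.2.2]) (by ring)
      have hcover : (Set.univ : Set (Set.Icc (0:ℝ) 1)) ⊆
          {γ : Set.Icc (0:ℝ) 1 | R (mixAct (γ : ℝ) (constAct S a) (constAct S b)) f} ∪
          {γ : Set.Icc (0:ℝ) 1 | R f (mixAct (γ : ℝ) (constAct S a) (constAct S b))} := by
        intro γ _
        rcases hcomp _ (hmemX γ) with h | h
        · exact Or.inl h
        · exact Or.inr h
      have h1U : (⟨1, by norm_num⟩ : Set.Icc (0:ℝ) 1) ∈
          {γ : Set.Icc (0:ℝ) 1 | R (mixAct (γ : ℝ) (constAct S a) (constAct S b)) f} := by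
        show R (mixAct (1:ℝ) (constAct S a) (constAct S b)) f
        rw [mixAct_one]; exact hra
      have h0V : (⟨0, by norm_num⟩ : Set.Icc (0:ℝ) 1) ∈
          {γ : Set.Icc (0:ℝ) 1 | R f (mixAct (γ : ℝ) (constAct S a) (constAct S b))} := by
        show R f (mixAct (0:ℝ) (constAct S a) (constAct S b))
        have h2 : mixAct (0:ℝ) (constAct S a) (constAct S b) = constAct S b := by
          funext s; simp [mixAct, constAct]
        rw [h2]; exact hrb
      haveI : PreconnectedSpace (Set.Icc (0:ℝ) 1) :=
        Subtype.preconnectedSpace isPreconnected_Icc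
      have hpre : IsPreconnected (Set.univ : Set (Set.Icc (0:ℝ) 1)) := isPreconnected_univ
      obtain ⟨γ, -, hγU, hγV⟩ := hpre _ _ hU hV hcover
        ⟨_, Set.mem_univ _, h1U⟩ ⟨_, Set.mem_univ _, h0V⟩
      exact hasym _ f (constAct_isAct (hmemX γ)) hf hγU hγV
    · push_neg at hB
      have hall : ∀ x ∈ X, R (constAct S x) f := by
        intro x hx
        rcases hcomp x hx with h | h
        · exact h
        · exact absurd h (hB x hx)
      obtain ⟨y, hyt, hymin⟩ := finset_exists_rmin
        (fun u v => R (constAct S u) (constAct S v)) hfin.toFinset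
        (fun z hz h => hasym _ _ (constAct_isAct (htX z hz)) (constAct_isAct (htX z hz)) h h)
        (fun a ha b hb c hc hab hbc => htrans _ _ _ (constAct_isAct (htX a ha))
          (constAct_isAct (htX b hb)) (constAct_isAct (htX c hc)) hab hbc)
        htne
      have hyX : y ∈ X := htX y hyt
      by_cases hyq : R (constAct S y) (constAct S q)
      · have hfq : R f (constAct S q) := by
          apply hax5 f (constAct S q) hf (constAct_isAct hq)
          intro s
          exact tgg' (f s) (hf.1 s) y hyX q hq (hymin (f s) (htmem s)) hyq
        exact hasym f (constAct S q) hf (constAct_isAct hq) hfq (hall q hq)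
      · have hpy : R (constAct S p) (constAct S y) := tgg p hp q hq y hyX hpq hyq
        have hO : IsOpen {α : Set.Icc (0:ℝ) 1 |
            R (constAct S y) (mixAct (α : ℝ) f (constAct S p))} :=
          (hax2 f (constAct S p) (constAct S y) hf (constAct_isAct hp)
            (constAct_isAct hyX)).2
        have h1 : (⟨1, by norm_num⟩ : Set.Icc (0:ℝ) 1) ∈ {α : Set.Icc (0:ℝ) 1 |
            R (constAct S y) (mixAct (α : ℝ) f (constAct S p))} := by
          show R (constAct S y) (mixAct (1:ℝ) f (constAct S p))
          rw [mixAct_one]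
          exact hall y hyX
        obtain ⟨α, hα0, hα1, hαIcc, hαO⟩ := exists_mem_open_lt_one hO h1
        have hg : IsAct X (mixAct α f (constAct S p)) :=
          mixAct_isAct hX hf hp hα0 (le_of_lt hα1)
        have hgy : R (mixAct α f (constAct S p)) (constAct S y) := by
          apply hax5 _ _ hg (constAct_isAct hyX)
          intro s
          have hfsX : f s ∈ X := hf.1 s
          have hm1X : (α • y + (1 - α) • p) ∈ X :=
            hX hyX hp (le_of_lt hα0) (by linarith) (by ring)
          have hm2X : (α • f s + (1 - α) • p) ∈ X :=
            hX hfsX hp (le_of_lt hα0) (by linarith) (by ring)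
          have hge : ¬ R (constAct S (α • y + (1 - α) • p))
              (constAct S (α • f s + (1 - α) • p)) := by
            intro hcontra
            exact hymin (f s) (htmem s)
              ((hax3 (constAct S y) (constAct S (f s)) (constAct_isAct hyX)
                (constAct_isAct hfsX) p hp α hα0 hα1).2 hcontra)
          have hgt : R (constAct S (α • y + (1 - α) • p)) (constAct S y) := by
            have h := (hax3 (constAct S p) (constAct S y) (constAct_isAct hp)
              (constAct_isAct hyX) y hyX (1 - α) (by linarith) (by linarith)).1 hpy
            have e1 : mixAct (1 - α) (constAct S p) (constAct S y)
                = constAct S (α • y + (1 - α) • p) := by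
              funext s'
              show (1 - α) • p + (1 - (1 - α)) • y = α • y + (1 - α) • p
              rw [sub_sub_cancel]
              exact add_comm _ _
            have e2 : mixAct (1 - α) (constAct S y) (constAct S y) = constAct S y := by
              funext s'
              show (1 - α) • y + (1 - (1 - α)) • y = y
              rw [sub_sub_cancel]
              exact Convex.combo_self (by ring) y
            rw [e1, e2] at h
            exact h
          exact tgg' _ hm2X _ hm1X _ hyX hge hgt
        exact hasym _ _ hg (constAct_isAct hyX) hgy hαO
  · push_neg at hA
    have hall : ∀ x ∈ X, R f (constAct S x) := by
      intro x hx
      rcases hcomp x hx with h | h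
      · exact absurd h (hA x hx)
      · exact h
    obtain ⟨w, hwt, hwmin⟩ := finset_exists_rmin
      (fun u v => R (constAct S v) (constAct S u)) hfin.toFinset
      (fun z hz h => hasym _ _ (constAct_isAct (htX z hz)) (constAct_isAct (htX z hz)) h h)
      (fun a ha b hb c hc hab hbc => htrans _ _ _ (constAct_isAct (htX c hc))
        (constAct_isAct (htX b hb)) (constAct_isAct (htX a ha)) hbc hab)
      htne
    have hwX : w ∈ X := htX w hwt
    by_cases hpw : R (constAct S p) (constAct S w)
    · have hpf : R (constAct S p) f := by
        apply hax5 (constAct S p) f (constAct_isAct hp) hf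
        intro s
        exact tgg p hp w hwX (f s) (hf.1 s) hpw (hwmin (f s) (htmem s))
      exact hasym f (constAct S p) hf (constAct_isAct hp) (hall p hp) hpf
    · have hwq : R (constAct S w) (constAct S q) := tgg' w hwX p hp q hq hpw hpq
      have hO : IsOpen {α : Set.Icc (0:ℝ) 1 |
          R (mixAct (α : ℝ) f (constAct S q)) (constAct S w)} :=
        (hax2 f (constAct S q) (constAct S w) hf (constAct_isAct hq)
          (constAct_isAct hwX)).1
      have h1 : (⟨1, by norm_num⟩ : Set.Icc (0:ℝ) 1) ∈ {α : Set.Icc (0:ℝ) 1 |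
          R (mixAct (α : ℝ) f (constAct S q)) (constAct S w)} := by
        show R (mixAct (1:ℝ) f (constAct S q)) (constAct S w)
        rw [mixAct_one]
        exact hall w hwX
      obtain ⟨α, hα0, hα1, hαIcc, hαO⟩ := exists_mem_open_lt_one hO h1
      have hg : IsAct X (mixAct α f (constAct S q)) :=
        mixAct_isAct hX hf hq hα0 (le_of_lt hα1)
      have hwg : R (constAct S w) (mixAct α f (constAct S q)) := by
        apply hax5 (constAct S w) _ (constAct_isAct hwX) hg
        intro s
        have hfsX : f s ∈ X := hf.1 s
        have hm1X : (α • w + (1 - α) • q) ∈ X :=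
          hX hwX hq (le_of_lt hα0) (by linarith) (by ring)
        have hm2X : (α • f s + (1 - α) • q) ∈ X :=
          hX hfsX hq (le_of_lt hα0) (by linarith) (by ring)
        have hge : ¬ R (constAct S (α • f s + (1 - α) • q))
            (constAct S (α • w + (1 - α) • q)) := by
          intro hcontra
          exact hwmin (f s) (htmem s)
            ((hax3 (constAct S (f s)) (constAct S w) (constAct_isAct hfsX)
              (constAct_isAct hwX) q hq α hα0 hα1).2 hcontra)
        have hgt : R (constAct S w) (constAct S (α • w + (1 - α) • q)) := by
          have h := (hax3 (constAct S w) (constAct S q) (constAct_isAct hwX)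
            (constAct_isAct hq) w hwX (1 - α) (by linarith) (by linarith)).1 hwq
          have e1 : mixAct (1 - α) (constAct S w) (constAct S w) = constAct S w := by
            funext s'
            show (1 - α) • w + (1 - (1 - α)) • w = w
            rw [sub_sub_cancel]
            exact Convex.combo_self (by ring) w
          have e2 : mixAct (1 - α) (constAct S q) (constAct S w)
              = constAct S (α • w + (1 - α) • q) := by
            funext s'
            show (1 - α) • q + (1 - (1 - α)) • w = α • w + (1 - α) • q
            rw [sub_sub_cancel]
            exact add_comm _ _
          rw [e1, e2] at h
          exact h
        exact tgg w hwX _ hm1X _ hm2X hgt hge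
      exact hasym _ _ hg (constAct_isAct hwX) hαO hwg


end Statement
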